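/- For an integer n ≥ 3, let ν := (1/(2n))δ_0 + (1/n)·Σ_{i=1}^{n−1} δ_{i/n} + (1/(2n))δ_1, μ := (1/n)·Σ_{i=1}^{n} δ_{(2i−1)/(2n)}, and η := (3/(2n))δ_{1/n} + (1/n)·Σ_{i=2}^{n−2} δ_{i/n} + (3/(2n))δ_{(n−1)/n}. Then η ≤_c μ ≤_c ν in the convex order. -/

import Mathlib

open MeasureTheory Filter Set

noncomputable section

/-- The quantile function of a measure `μ` on `ℝ`:
`F_μ^{-1}(u) = inf {x : μ((-∞, x]) ≥ u}`. -/
def quantile (μ : Measure ℝ) (u : ℝ) : ℝ :=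
  sInf {x : ℝ | u ≤ (μ (Iic x)).toReal}

/-- The `p`-Wasserstein distance on the real line, expressed via quantile functions. -/
def Wp (p : ℝ) (μ ν : Measure ℝ) : ℝ :=
  (∫ u in Ioo (0:ℝ) 1, |quantile μ u - quantile ν u| ^ p) ^ (1 / p)

/-- `μ ∈ P_p(ℝ)`: a Borel probability measure on `ℝ` with finite `p`-th moment. -/
def MemPp (p : ℝ) (μ : Measure ℝ) : Prop :=
  IsProbabilityMeasure μ ∧ Integrable (fun x => |x| ^ p) μ

/-- The convex hull of a function `F` on a set `S`: the greatest convex function on `S`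
bounded above by `F` (pointwise supremum of all convex minorants). -/
def convexHullFn (S : Set ℝ) (F : ℝ → ℝ) : ℝ → ℝ :=
  fun x => sSup {y : ℝ | ∃ g : ℝ → ℝ, ConvexOn ℝ S g ∧ (∀ z ∈ S, g z ≤ F z) ∧ y = g x}

/-- Left-hand derivative. -/
def leftDeriv (f : ℝ → ℝ) (x : ℝ) : ℝ := derivWithin f (Iio x) x

/-- Right-hand derivative. -/
def rightDeriv (f : ℝ → ℝ) (x : ℝ) : ℝ := derivWithin f (Ioi x) x

/-- `G(v) = ∫₀^v (F_μ^{-1}(u) - F_ν^{-1}(u)) du`. -/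
def Gfun (μ ν : Measure ℝ) (v : ℝ) : ℝ :=
  ∫ u in Ioo (0:ℝ) v, (quantile μ u - quantile ν u)

/-- The Wasserstein projection `I(μ,ν)`: the image of Lebesgue measure on `(0,1)` under
`u ↦ F_μ^{-1}(u) - ∂₋ co(G)(u)`. -/
def proj_I (μ ν : Measure ℝ) : Measure ℝ :=
  Measure.map
    (fun u => quantile μ u - leftDeriv (convexHullFn (Icc 0 1) (Gfun μ ν)) u)
    (volume.restrict (Ioo (0:ℝ) 1))

/-- The Wasserstein projection `J(μ,ν)`: the image of Lebesgue measure on `(0,1)` under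
`u ↦ F_ν^{-1}(u) + ∂₋ co(G)(u)`. -/
def proj_J (μ ν : Measure ℝ) : Measure ℝ :=
  Measure.map
    (fun u => quantile ν u + leftDeriv (convexHullFn (Icc 0 1) (Gfun μ ν)) u)
    (volume.restrict (Ioo (0:ℝ) 1))

/-- The convex order `μ ≤_c ν`. -/
def ConvexOrder (μ ν : Measure ℝ) : Prop :=
  ∀ f : ℝ → ℝ, ConvexOn ℝ univ f → Integrable f μ → Integrable f ν →
    ∫ x, f x ∂μ ≤ ∫ x, f x ∂ν

/-- `f` is càdlàg on `[a,b]`: right-continuous on `[a,b)` and with left limits on `(a,b]`. -/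
def Cadlag (f : ℝ → ℝ) (a b : ℝ) : Prop :=
  (∀ x ∈ Ico a b, Tendsto f (nhdsWithin x (Ici x)) (nhds (f x))) ∧
  (∀ x ∈ Ioc a b, ∃ l : ℝ, Tendsto f (nhdsWithin x (Iio x)) (nhds l))

private lemma integrable_smul_dirac' {f : ℝ → ℝ} (hf : Continuous f) {c : ENNReal} (hc : c ≠ ⊤)
    (a : ℝ) : Integrable f (c • Measure.dirac a) := by
  refine Integrable.smul_measure ⟨hf.aestronglyMeasurable, ?_⟩ hc
  simp [HasFiniteIntegral, lintegral_dirac]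

private lemma integral_smul_dirac' (f : ℝ → ℝ) (c : ENNReal) (a : ℝ) :
    ∫ x, f x ∂(c • Measure.dirac a) = c.toReal * f a := by
  rw [integral_smul_measure, integral_dirac, smul_eq_mul]

private lemma convex_comb {f : ℝ → ℝ} (hf : ConvexOn ℝ Set.univ f) {a b : ℝ} (x y : ℝ)
    (ha : 0 ≤ a) (hb : 0 ≤ b) (hab : a + b = 1) :
    f (a*x + b*y) ≤ a * f x + b * f y := by
  simpa [smul_eq_mul] using hf.2 (Set.mem_univ x) (Set.mem_univ y) ha hb hab

private lemma convex_mid {f : ℝ → ℝ} (hf : ConvexOn ℝ Set.univ f) (x y : ℝ) :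
    f ((x + y)/2) ≤ (f x + f y)/2 := by
  have h := convex_comb hf x y (by norm_num : (0:ℝ) ≤ 1/2) (by norm_num : (0:ℝ) ≤ 1/2) (by norm_num)
  have hxy : (x+y)/2 = (1/2)*x + (1/2)*y := by ring
  rw [hxy]; linarith

private lemma icc_to_range (n : ℕ) (g : ℕ → ℝ) :
    ∑ i ∈ Finset.Icc 1 n, g i = ∑ j ∈ Finset.range n, g (j+1) := by
  rw [← Finset.Ico_add_one_right_eq_Icc, Finset.sum_Ico_eq_sum_range]
  simp [Nat.add_comm]

private lemma key2 (n : ℕ) (hn : 3 ≤ n) {f : ℝ → ℝ} (hf : ConvexOn ℝ Set.univ f) :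
    (3/2) * f (1/n) + ∑ i ∈ Finset.Icc 2 (n-2), f ((i:ℝ)/n) + (3/2) * f (((n:ℝ)-1)/n)
      ≤ ∑ i ∈ Finset.Icc 1 n, f ((2*(i:ℝ)-1)/(2*n)) := by
  have hN : (0:ℝ) < n := by positivity
  have hN3 : (3:ℝ) ≤ n := by exact_mod_cast hn
  set N : ℝ := (n : ℝ) with hNdef
  have hNne : N ≠ 0 := ne_of_gt hN
  -- decompose Icc 1 (n-1) sum
  have hset : Finset.Icc 1 (n-1) = insert 1 (insert (n-1) (Finset.Icc 2 (n-2))) := by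
    ext x; simp only [Finset.mem_Icc, Finset.mem_insert]; omega
  have hA : ∑ i ∈ Finset.Icc 1 (n-1), f ((i:ℝ)/N)
      = f (1/N) + f ((N-1)/N) + ∑ i ∈ Finset.Icc 2 (n-2), f ((i:ℝ)/N) := by
    rw [hset, Finset.sum_insert (by simp only [Finset.mem_insert, Finset.mem_Icc]; omega),
      Finset.sum_insert (by simp only [Finset.mem_Icc]; omega)]
    have h1 : ((1:ℕ):ℝ) = 1 := by norm_num
    have h2 : ((n-1:ℕ):ℝ) = N - 1 := by
      rw [hNdef]; rw [Nat.cast_sub (by omega)]; push_cast; ring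
    rw [h1, h2]; ring
  -- main sum S over range n
  set G : ℕ → ℝ := fun j => f ((2*(j:ℝ)+1)/(2*N)) with hG
  have hS : ∑ i ∈ Finset.Icc 1 n, f ((2*(i:ℝ)-1)/(2*N)) = ∑ j ∈ Finset.range n, G j := by
    rw [icc_to_range]
    apply Finset.sum_congr rfl
    intro j _
    simp only [hG]; push_cast; ring_nf
  -- midpoint bound for the middle sum
  have hmid : ∑ i ∈ Finset.Icc 1 (n-1), f ((i:ℝ)/N)
      ≤ ∑ j ∈ Finset.range (n-1), (G j + G (j+1))/2 := by
    rw [icc_to_range]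
    apply Finset.sum_le_sum
    intro j _
    have hx : (((j+1:ℕ)):ℝ)/N = ((2*(j:ℝ)+1)/(2*N) + (2*((j+1:ℕ):ℝ)+1)/(2*N))/2 := by
      push_cast; field_simp; ring
    rw [hx]
    have := convex_mid hf ((2*(j:ℝ)+1)/(2*N)) ((2*((j+1:ℕ):ℝ)+1)/(2*N))
    simpa [hG] using this
  have hsplit : ∑ j ∈ Finset.range (n-1), (G j + G (j+1))/2
      = (∑ j ∈ Finset.range (n-1), G j + ∑ j ∈ Finset.range (n-1), G (j+1))/2 := by
    rw [← Finset.sum_add_distrib, ← Finset.sum_div]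
  obtain ⟨m, rfl⟩ : ∃ m, n = m + 1 := ⟨n - 1, by omega⟩
  have hm1 : m + 1 - 1 = m := by omega
  have hs1 : ∑ j ∈ Finset.range (m+1), G j = ∑ j ∈ Finset.range m, G j + G m :=
    Finset.sum_range_succ G m
  have hs2 : ∑ j ∈ Finset.range (m+1), G j = ∑ j ∈ Finset.range m, G (j+1) + G 0 :=
    Finset.sum_range_succ' G m
  -- endpoints
  have hG0 : G 0 = f (1/(2*N)) := by simp [hG]
  have hGm : G m = f ((2*N-1)/(2*N)) := by
    simp only [hG]
    congr 1
    have : (m:ℝ) = N - 1 := by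
      rw [hNdef]; push_cast; ring
    rw [this]; ring_nf
  -- convexity at the endpoints
  have hend : f (1/N) + f ((N-1)/N) ≤ f (1/(2*N)) + f ((2*N-1)/(2*N)) := by
    set lam : ℝ := (2*N-3)/(2*N-2) with hlam
    have hden : (0:ℝ) < 2*N-2 := by linarith
    have hN1 : N - 1 ≠ 0 := (show (0:ℝ) < N - 1 by linarith).ne'
    set mu : ℝ := 1/(2*N-2) with hmu
    have hl0 : 0 ≤ lam := div_nonneg (by linarith) hden.le
    have hmu0 : 0 ≤ mu := by positivity
    have hsum : lam + mu = 1 := by rw [hlam, hmu]; field_simp; ring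
    have h1 := convex_comb hf (1/(2*N)) ((2*N-1)/(2*N)) hl0 hmu0 hsum
    have h2 := convex_comb hf (1/(2*N)) ((2*N-1)/(2*N)) hmu0 hl0 (by linarith)
    have hx1 : lam*(1/(2*N)) + mu*((2*N-1)/(2*N)) = 1/N := by
      rw [hlam, hmu]; field_simp; ring
    have hx2 : mu*(1/(2*N)) + lam*((2*N-1)/(2*N)) = (N-1)/N := by
      rw [hlam, hmu]; field_simp; ring
    rw [hx1] at h1
    rw [hx2] at h2
    have hr : lam * f (1/(2*N)) + mu * f ((2*N-1)/(2*N))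
        + (mu * f (1/(2*N)) + lam * f ((2*N-1)/(2*N)))
        = (lam + mu) * (f (1/(2*N)) + f ((2*N-1)/(2*N))) := by ring
    rw [hsum, one_mul] at hr
    linarith
  rw [hS]
  rw [hm1] at hmid hsplit hA
  linarith [hA, hmid, hsplit, hs1, hs2, hend, hG0, hGm]


private lemma key1 (n : ℕ) (hn : 1 ≤ n) {f : ℝ → ℝ} (hf : ConvexOn ℝ Set.univ f) :
    ∑ i ∈ Finset.Icc 1 n, f ((2*(i:ℝ)-1)/(2*n))
      ≤ (1/2) * f 0 + ∑ i ∈ Finset.Icc 1 (n-1), f ((i:ℝ)/n) + (1/2) * f 1 := by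
  have hN : (0:ℝ) < n := by positivity
  obtain ⟨m, rfl⟩ : ∃ m, n = m + 1 := ⟨n - 1, by omega⟩
  set N : ℝ := ((m+1 : ℕ) : ℝ) with hNdef
  have hNne : N ≠ 0 := ne_of_gt hN
  -- convert to range sums
  rw [icc_to_range, icc_to_range]
  have hmn : m + 1 - 1 = m := by omega
  rw [hmn]
  -- termwise midpoint bound
  have step : ∀ j ∈ Finset.range (m+1),
      f ((2*((j+1:ℕ):ℝ)-1)/(2*N)) ≤ (f ((j:ℝ)/N) + f (((j+1:ℕ):ℝ)/N))/2 := by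
    intro j _
    have hx : (2*((j+1:ℕ):ℝ)-1)/(2*N) = ((j:ℝ)/N + ((j+1:ℕ):ℝ)/N)/2 := by
      push_cast; field_simp; ring
    rw [hx]; exact convex_mid hf _ _
  have h1 : ∑ j ∈ Finset.range (m+1), f ((2*((j+1:ℕ):ℝ)-1)/(2*N))
      ≤ ∑ j ∈ Finset.range (m+1), (f ((j:ℝ)/N) + f (((j+1:ℕ):ℝ)/N))/2 :=
    Finset.sum_le_sum step
  have h2 : ∑ j ∈ Finset.range (m+1), f ((j:ℝ)/N)
      = f 0 + ∑ j ∈ Finset.range m, f (((j+1:ℕ):ℝ)/N) := by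
    rw [Finset.sum_range_succ']
    push_cast
    simp [add_comm]
  have h3 : ∑ j ∈ Finset.range (m+1), f (((j+1:ℕ):ℝ)/N)
      = ∑ j ∈ Finset.range m, f (((j+1:ℕ):ℝ)/N) + f 1 := by
    rw [Finset.sum_range_succ]
    have : ((m+1:ℕ):ℝ)/N = 1 := div_self hNne
    rw [this]
  have h4 : ∑ j ∈ Finset.range (m+1), (f ((j:ℝ)/N) + f (((j+1:ℕ):ℝ)/N))/2
      = (∑ j ∈ Finset.range (m+1), f ((j:ℝ)/N)
        + ∑ j ∈ Finset.range (m+1), f (((j+1:ℕ):ℝ)/N))/2 := by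
    rw [← Finset.sum_add_distrib, ← Finset.sum_div]
  rw [h4, h2, h3] at h1
  linarith


/-- for the discrete measures `η`, `μ`, `ν` below, `η ≤_c μ ≤_c ν`. -/
theorem eta_mu_nu_convex_order (n : ℕ) (hn : 3 ≤ n) (ν μ η : Measure ℝ)
    (hν : ν = (1 / (2 * n) : ENNReal) • Measure.dirac (0:ℝ)
        + ∑ i ∈ Finset.Icc 1 (n - 1), (1 / n : ENNReal) • Measure.dirac ((i : ℝ) / n)
        + (1 / (2 * n) : ENNReal) • Measure.dirac (1:ℝ))
    (hμ : μ = ∑ i ∈ Finset.Icc 1 n,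
        (1 / n : ENNReal) • Measure.dirac ((2 * (i : ℝ) - 1) / (2 * n)))
    (hη : η = (3 / (2 * n) : ENNReal) • Measure.dirac ((1 : ℝ) / n)
        + ∑ i ∈ Finset.Icc 2 (n - 2), (1 / n : ENNReal) • Measure.dirac ((i : ℝ) / n)
        + (3 / (2 * n) : ENNReal) • Measure.dirac (((n : ℝ) - 1) / n)) :
    ConvexOrder η μ ∧ ConvexOrder μ ν := by

  have hNpos : (0:ℝ) < n := by positivity
  have hn0 : (n:ENNReal) ≠ 0 := by positivity
  have h1top : (1 / n : ENNReal) ≠ ⊤ := by simp [ENNReal.div_eq_top, hn0]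
  have h2top : (1 / (2*n) : ENNReal) ≠ ⊤ := by simp [ENNReal.div_eq_top, hn0]
  have h3top : (3 / (2*n) : ENNReal) ≠ ⊤ := by simp [ENNReal.div_eq_top, hn0]
  have hμgen : ∀ f : ℝ → ℝ, Continuous f →
      ∫ x, f x ∂μ = ∑ i ∈ Finset.Icc 1 n, (1/(n:ℝ)) * f ((2*(i:ℝ)-1)/(2*n)) := by
    intro f hc
    rw [hμ, integral_finset_sum_measure (fun i _ => integrable_smul_dirac' hc h1top _)]
    refine Finset.sum_congr rfl fun i _ => ?_
    rw [integral_smul_dirac']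
    congr 1
    simp [ENNReal.toReal_div]
  constructor
  · -- η ≤c μ
    intro f hf _ _
    have hc : Continuous f := continuousOn_univ.mp (hf.continuousOn isOpen_univ)
    have hηint : ∫ x, f x ∂η = (3/(2*(n:ℝ))) * f (1/n)
        + (∑ i ∈ Finset.Icc 2 (n-2), (1/(n:ℝ)) * f ((i:ℝ)/n))
        + (3/(2*(n:ℝ))) * f (((n:ℝ)-1)/n) := by
      have hIA : Integrable f ((3 / (2 * n) : ENNReal) • Measure.dirac ((1:ℝ)/n)) :=
        integrable_smul_dirac' hc h3top _
      have hIS : Integrable f (∑ i ∈ Finset.Icc 2 (n-2),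
          (1 / n : ENNReal) • Measure.dirac ((i : ℝ) / n)) :=
        integrable_finset_sum_measure.2 (fun i _ => integrable_smul_dirac' hc h1top _)
      have hIB : Integrable f ((3 / (2 * n) : ENNReal) • Measure.dirac (((n:ℝ)-1)/n)) :=
        integrable_smul_dirac' hc h3top _
      rw [hη, integral_add_measure (hIA.add_measure hIS) hIB, integral_add_measure hIA hIS,
        integral_smul_dirac', integral_smul_dirac',
        integral_finset_sum_measure (fun i _ => integrable_smul_dirac' hc h1top _)]
      congr 1
      · congr 1
        · congr 1; simp [ENNReal.toReal_div]
        · refine Finset.sum_congr rfl fun i _ => ?_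
          rw [integral_smul_dirac']; congr 1; simp [ENNReal.toReal_div]
      · congr 1; simp [ENNReal.toReal_div]
    rw [hηint, hμgen f hc, ← Finset.mul_sum, ← Finset.mul_sum]
    have h := key2 n hn hf
    set U := ∑ i ∈ Finset.Icc 1 n, f ((2*(i:ℝ)-1)/(2*(n:ℝ))) with hU
    set B := ∑ i ∈ Finset.Icc 2 (n-2), f ((i:ℝ)/(n:ℝ)) with hB
    have h2 := mul_le_mul_of_nonneg_left h (le_of_lt (by positivity : (0:ℝ) < 1/(n:ℝ)))
    have hexp : (1/(n:ℝ)) * ((3/2) * f (1/(n:ℝ)) + B + (3/2) * f (((n:ℝ)-1)/(n:ℝ)))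
        = 3/(2*(n:ℝ)) * f (1/(n:ℝ)) + (1/(n:ℝ)) * B + 3/(2*(n:ℝ)) * f (((n:ℝ)-1)/(n:ℝ)) := by
      field_simp
    linarith
  · -- μ ≤c ν
    intro f hf _ _
    have hc : Continuous f := continuousOn_univ.mp (hf.continuousOn isOpen_univ)
    have hνint : ∫ x, f x ∂ν = (1/(2*(n:ℝ))) * f 0
        + (∑ i ∈ Finset.Icc 1 (n-1), (1/(n:ℝ)) * f ((i:ℝ)/n)) + (1/(2*(n:ℝ))) * f 1 := by
      have hIA : Integrable f ((1 / (2 * n) : ENNReal) • Measure.dirac (0:ℝ)) :=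
        integrable_smul_dirac' hc h2top _
      have hIS : Integrable f (∑ i ∈ Finset.Icc 1 (n-1),
          (1 / n : ENNReal) • Measure.dirac ((i : ℝ) / n)) :=
        integrable_finset_sum_measure.2 (fun i _ => integrable_smul_dirac' hc h1top _)
      have hIB : Integrable f ((1 / (2 * n) : ENNReal) • Measure.dirac (1:ℝ)) :=
        integrable_smul_dirac' hc h2top _
      rw [hν, integral_add_measure (hIA.add_measure hIS) hIB, integral_add_measure hIA hIS,
        integral_smul_dirac', integral_smul_dirac',
        integral_finset_sum_measure (fun i _ => integrable_smul_dirac' hc h1top _)]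
      congr 1
      · congr 1
        · congr 1; simp [ENNReal.toReal_div]
        · refine Finset.sum_congr rfl fun i _ => ?_
          rw [integral_smul_dirac']; congr 1; simp [ENNReal.toReal_div]
      · congr 1; simp [ENNReal.toReal_div]
    rw [hνint, hμgen f hc, ← Finset.mul_sum, ← Finset.mul_sum]
    have h := key1 n (by omega) hf
    set U := ∑ i ∈ Finset.Icc 1 n, f ((2*(i:ℝ)-1)/(2*(n:ℝ))) with hU
    set A := ∑ i ∈ Finset.Icc 1 (n-1), f ((i:ℝ)/(n:ℝ)) with hA
    have h2 := mul_le_mul_of_nonneg_left h (le_of_lt (by positivity : (0:ℝ) < 1/(n:ℝ)))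
    have hexp : (1/(n:ℝ)) * ((1/2) * f 0 + A + (1/2) * f 1)
        = 1/(2*(n:ℝ)) * f 0 + (1/(n:ℝ)) * A + 1/(2*(n:ℝ)) * f 1 := by
      field_simp
    linarith


end
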